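/- Assume X > 0 and h > 0. For every x ≥ 0, the derivative of the map x ↦ SIR1(x,h) equals (2·p_t/(p_M·(x² + h²)²))·(X·x² − (X² + Y²)·x − X·h²); consequently this derivative is nonnegative if x ≥ Ψˣ(h) and strictly negative if 0 ≤ x < Ψˣ(h), where Ψˣ(h) = (X² + Y² + sqrt((X² + Y²)² + 4·X²·h²))/(2·X). -/

import Mathlib

/-- SIR at the UAV located at (x,0,h). -/
noncomputable def SIR1 (pt pM X Y x h : ℝ) : ℝ :=
  pt * ((x - X) ^ 2 + Y ^ 2 + h ^ 2) / (pM * (x ^ 2 + h ^ 2))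

/-- The horizontal stationary point Ψˣ(h). -/
noncomputable def PsiX (X Y h : ℝ) : ℝ :=
  (X ^ 2 + Y ^ 2 + Real.sqrt ((X ^ 2 + Y ^ 2) ^ 2 + 4 * X ^ 2 * h ^ 2)) / (2 * X)

theorem stmt1 (D X Y pt pu pM : ℝ) (hD : 0 < D) (hX0 : 0 ≤ X) (hXD : X ≤ D)
    (hX : 0 < X) (hpt : 0 < pt) (hpu : 0 < pu) (hpM : 0 < pM)
    (h : ℝ) (hh : 0 < h) :
    ∀ x : ℝ, 0 ≤ x →
      HasDerivAt (fun t => SIR1 pt pM X Y t h)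
        (2 * pt / (pM * (x ^ 2 + h ^ 2) ^ 2) *
          (X * x ^ 2 - (X ^ 2 + Y ^ 2) * x - X * h ^ 2)) x ∧
      (x ≥ PsiX X Y h →
        0 ≤ 2 * pt / (pM * (x ^ 2 + h ^ 2) ^ 2) *
          (X * x ^ 2 - (X ^ 2 + Y ^ 2) * x - X * h ^ 2)) ∧
      (x < PsiX X Y h →
        2 * pt / (pM * (x ^ 2 + h ^ 2) ^ 2) *
          (X * x ^ 2 - (X ^ 2 + Y ^ 2) * x - X * h ^ 2) < 0) := by
  intro x hx
  have hden : pM * (x ^ 2 + h ^ 2) ≠ 0 := by positivity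
  have hpre : 0 < 2 * pt / (pM * (x ^ 2 + h ^ 2) ^ 2) := by positivity
  set s := Real.sqrt ((X ^ 2 + Y ^ 2) ^ 2 + 4 * X ^ 2 * h ^ 2) with hsdef
  have hs0 : 0 ≤ s := Real.sqrt_nonneg _
  have hs2 : s ^ 2 = (X ^ 2 + Y ^ 2) ^ 2 + 4 * X ^ 2 * h ^ 2 := by
    rw [hsdef, Real.sq_sqrt]; positivity
  have hsB : X ^ 2 + Y ^ 2 < s := by nlinarith [hs2, hs0, mul_pos (mul_pos hX hX) (mul_pos hh hh), mul_self_nonneg s, sq_nonneg (X ^ 2 + Y ^ 2)]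
  have hPsi : PsiX X Y h = (X ^ 2 + Y ^ 2 + s) / (2 * X) := rfl
  refine ⟨?_, ?_, ?_⟩
  · have h1 : HasDerivAt (fun t : ℝ => pt * ((t - X) ^ 2 + Y ^ 2 + h ^ 2))
        (pt * (2 * (x - X))) x := by
      have : HasDerivAt (fun t : ℝ => (t - X) ^ 2 + Y ^ 2 + h ^ 2) (2 * (x - X)) x := by
        simpa using ((((hasDerivAt_id x).sub_const X).pow 2).add_const (Y ^ 2)).add_const (h ^ 2)
      exact this.const_mul pt
    have h2 : HasDerivAt (fun t : ℝ => pM * (t ^ 2 + h ^ 2)) (pM * (2 * x)) x := by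
      have : HasDerivAt (fun t : ℝ => t ^ 2 + h ^ 2) (2 * x) x := by
        simpa using ((hasDerivAt_id x).pow 2).add_const (h ^ 2)
      exact this.const_mul pM
    have := h1.div h2 hden
    refine this.congr_deriv ?_
    rw [div_mul_eq_mul_div, div_eq_div_iff (by positivity) (by positivity)]
    ring
  · intro hge
    rw [hPsi, ge_iff_le, div_le_iff₀ (by positivity)] at hge
    have hq : 0 ≤ X * x ^ 2 - (X ^ 2 + Y ^ 2) * x - X * h ^ 2 := by
      nlinarith [hge, hs2, hs0]
    positivity
  · intro hlt
    rw [hPsi, lt_div_iff₀ (by positivity)] at hlt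
    have hq : X * x ^ 2 - (X ^ 2 + Y ^ 2) * x - X * h ^ 2 < 0 := by
      nlinarith [hlt, hs2, hsB, mul_nonneg (mul_nonneg (by norm_num : (0:ℝ) ≤ 2) hX.le) hx]
    exact mul_neg_of_pos_of_neg hpre hq
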